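/- Let n, m, k be natural numbers with k ≤ n, let p ≥ 0 be a real number, and let f : {0,1}^n × {0,1}^n → {0,1}^m. Suppose that for every pair of sets B1, B2 ⊆ {0,1}^n with |B1| = |B2| = 2^k and every a ∈ {0,1}^m one has |{(u,v) ∈ B1 × B2 : f(u,v) = a}| ≤ p · 2^k · 2^k. Then for all natural numbers k1, k2 with k ≤ k1 ≤ n and k ≤ k2 ≤ n, every B1' ⊆ {0,1}^n with |B1'| = 2^{k1}, every B2' ⊆ {0,1}^n with |B2'| = 2^{k2}, and every a ∈ {0,1}^m, one has |{(u,v) ∈ B1' × B2' : f(u,v) = a}| ≤ p · 2^{k1} · 2^{k2}. -/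

import Mathlib

/-- If a function `f : {0,1}^n × {0,1}^n → {0,1}^m` maps at most `p·2^k·2^k` pairs of every
rectangle `B1 × B2` with `|B1| = |B2| = 2^k` to any given value `a`, then the same bound
(with `p·2^{k1}·2^{k2}`) holds for all rectangles with `|B1'| = 2^{k1}`, `|B2'| = 2^{k2}`,
`k ≤ k1 ≤ n`, `k ≤ k2 ≤ n`. -/
theorem weak_regularity_implies_regularity
    (n m k : ℕ) (hk : k ≤ n) (p : ℝ) (hp : 0 ≤ p)
    (f : (Fin n → Bool) × (Fin n → Bool) → (Fin m → Bool))
    (h : ∀ B1 B2 : Finset (Fin n → Bool), B1.card = 2 ^ k → B2.card = 2 ^ k →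
      ∀ a : Fin m → Bool,
        (((B1 ×ˢ B2).filter (fun uv => f uv = a)).card : ℝ) ≤ p * 2 ^ k * 2 ^ k) :
    ∀ k1 k2 : ℕ, k ≤ k1 → k1 ≤ n → k ≤ k2 → k2 ≤ n →
      ∀ B1' B2' : Finset (Fin n → Bool), B1'.card = 2 ^ k1 → B2'.card = 2 ^ k2 →
        ∀ a : Fin m → Bool,
          (((B1' ×ˢ B2').filter (fun uv => f uv = a)).card : ℝ) ≤ p * 2 ^ k1 * 2 ^ k2 := by
  -- Step 1: extend the bound in the first coordinate
  have key : ∀ k1, k ≤ k1 → ∀ B1 B2 : Finset (Fin n → Bool),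
      B1.card = 2 ^ k1 → B2.card = 2 ^ k → ∀ a : Fin m → Bool,
      (((B1 ×ˢ B2).filter (fun uv => f uv = a)).card : ℝ) ≤ p * 2 ^ k1 * 2 ^ k := by
    intro k1 hk1
    induction k1, hk1 using Nat.le_induction with
    | base => exact fun B1 B2 h1 h2 a => h B1 B2 h1 h2 a
    | succ j hj ih =>
      intro B1 B2 h1 h2 a
      obtain ⟨S, hS, hScard⟩ := Finset.exists_subset_card_eq
        (show 2 ^ j ≤ B1.card by
          rw [h1]; exact Nat.pow_le_pow_right (by norm_num) (Nat.le_succ j))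
      have hT : (B1 \ S).card = 2 ^ j := by
        rw [Finset.card_sdiff_of_subset hS, h1, hScard, pow_succ]
        have : 0 < 2 ^ j := Nat.pow_pos (n := j) (by norm_num)
        omega
      have hdis : Disjoint (S ×ˢ B2) ((B1 \ S) ×ˢ B2) := by
        rw [Finset.disjoint_left]
        rintro ⟨u, v⟩ hu hv
        simp only [Finset.mem_product] at hu hv
        exact (Finset.mem_sdiff.mp hv.1).2 hu.1
      have hsplit : ((B1 ×ˢ B2).filter (fun uv => f uv = a)).card
          = ((S ×ˢ B2).filter (fun uv => f uv = a)).card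
            + (((B1 \ S) ×ˢ B2).filter (fun uv => f uv = a)).card := by
        rw [← Finset.card_union_of_disjoint
          (Finset.disjoint_filter_filter hdis), ← Finset.filter_union,
          ← Finset.union_product, Finset.union_sdiff_of_subset hS]
      rw [hsplit]
      push_cast
      have b1 := ih S B2 hScard h2 a
      have b2 := ih (B1 \ S) B2 hT h2 a
      calc (((S ×ˢ B2).filter (fun uv => f uv = a)).card : ℝ)
            + (((B1 \ S) ×ˢ B2).filter (fun uv => f uv = a)).card
          ≤ p * 2 ^ j * 2 ^ k + p * 2 ^ j * 2 ^ k := add_le_add b1 b2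
        _ = p * 2 ^ (j + 1) * 2 ^ k := by ring
  -- Step 2: extend the bound in the second coordinate
  intro k1 k2 hk1 hn1 hk2 hn2 B1 B2 h1 h2 a
  clear hk hn1 hn2
  induction k2, hk2 using Nat.le_induction generalizing B2 with
  | base => exact key k1 hk1 B1 B2 h1 h2 a
  | succ j hj ih =>
    obtain ⟨S, hS, hScard⟩ := Finset.exists_subset_card_eq
      (show 2 ^ j ≤ B2.card by
        rw [h2]; exact Nat.pow_le_pow_right (by norm_num) (Nat.le_succ j))
    have hT : (B2 \ S).card = 2 ^ j := by
      rw [Finset.card_sdiff_of_subset hS, h2, hScard, pow_succ]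
      have : 0 < 2 ^ j := Nat.pow_pos (n := j) (by norm_num)
      omega
    have hdis : Disjoint (B1 ×ˢ S) (B1 ×ˢ (B2 \ S)) := by
      rw [Finset.disjoint_left]
      rintro ⟨u, v⟩ hu hv
      simp only [Finset.mem_product] at hu hv
      exact (Finset.mem_sdiff.mp hv.2).2 hu.2
    have hsplit : ((B1 ×ˢ B2).filter (fun uv => f uv = a)).card
        = ((B1 ×ˢ S).filter (fun uv => f uv = a)).card
          + ((B1 ×ˢ (B2 \ S)).filter (fun uv => f uv = a)).card := by
      rw [← Finset.card_union_of_disjoint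
        (Finset.disjoint_filter_filter hdis), ← Finset.filter_union,
        ← Finset.product_union, Finset.union_sdiff_of_subset hS]
    rw [hsplit]
    push_cast
    have b1 := ih S hScard
    have b2 := ih (B2 \ S) hT
    calc ((((B1 ×ˢ S).filter (fun uv => f uv = a)).card : ℝ))
          + (((B1 ×ˢ (B2 \ S)).filter (fun uv => f uv = a)).card)
        ≤ p * 2 ^ k1 * 2 ^ j + p * 2 ^ k1 * 2 ^ j := add_le_add b1 b2
      _ = p * 2 ^ k1 * 2 ^ (j + 1) := by ring
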